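/- Let L = {a^{4i+1} | i ≥ 0} ∪ {a^{4^i} | i ≥ 1}, viewed as a subset S = {4i+1 | i ≥ 0} ∪ {4^i | i ≥ 1} of ℕ. Then S contains the infinite arithmetic progression {4i+1 | i ≥ 0}, its complement in ℕ contains the infinite arithmetic progression {4i+2 | i ≥ 0}, and S is not eventually periodic (i.e., L is not regular). -/

import Mathlib

private def Pmem (n : ℕ) : Prop :=
  (∃ i : ℕ, n = 4 * i + 1) ∨ ∃ i : ℕ, 1 ≤ i ∧ n = 4 ^ i

/-- S = {4i+1 | i ≥ 0} ∪ {4^i | i ≥ 1} contains an infinite AP, its complement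
    contains an infinite AP, but S is not eventually periodic. -/
theorem union_lang_separating :
    letI S : Set ℕ :=
      {n | ∃ i : ℕ, n = 4 * i + 1} ∪ {n | ∃ i : ℕ, 1 ≤ i ∧ n = 4 ^ i}
    (∀ i : ℕ, 4 * i + 1 ∈ S) ∧
    (∀ i : ℕ, 4 * i + 2 ∈ Sᶜ) ∧
    ¬ (∃ p : ℕ, 1 ≤ p ∧ ∃ N : ℕ, ∀ n ≥ N, (n ∈ S ↔ n + p ∈ S)) := by
  simp only [Set.mem_union, Set.mem_setOf_eq, Set.mem_compl_iff]
  have hPiff : ∀ n : ℕ, Pmem n ↔ ((∃ i : ℕ, n = 4 * i + 1) ∨ ∃ i : ℕ, 1 ≤ i ∧ n = 4 ^ i) :=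
    fun n => Iff.rfl
  refine ⟨fun i => Or.inl ⟨i, rfl⟩, ?_, ?_⟩
  · intro i hmem
    rcases hmem with ⟨j, hj⟩ | ⟨j, hj1, hj⟩
    · omega
    · have : (4:ℕ) ∣ 4 ^ j := dvd_pow_self 4 (by omega)
      omega
  · rintro ⟨p, hp, N, hN⟩
    simp only [← hPiff] at hN
    have hiter : ∀ m : ℕ, ∀ n ≥ N, (Pmem n ↔ Pmem (n + m * p)) := by
      intro m
      induction m with
      | zero => simp
      | succ m ih =>
        intro n hn
        have h1 := ih n hn
        have h2 := hN (n + m * p) (by omega)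
        have h3 : n + m * p + p = n + (m + 1) * p := by ring
        rw [h1, h2, h3]
    set k := N + 4 * p with hk
    have hkpow : k < 4 ^ k := Nat.lt_pow_self (by norm_num : 1 < 4)
    have hkS : Pmem (4 ^ k) := Or.inr ⟨k, by omega, rfl⟩
    have hmem : Pmem (4 ^ k + 4 * p) := (hiter 4 (4 ^ k) (by omega)).1 hkS
    rcases hmem with ⟨j, hj⟩ | ⟨j, hj1, hj⟩
    · have : (4:ℕ) ∣ 4 ^ k := dvd_pow_self 4 (by omega)
      omega
    · have hjk : k < j := by
        by_contra h
        push_neg at h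
        have : (4:ℕ) ^ j ≤ 4 ^ k := Nat.pow_le_pow_right (by norm_num) h
        omega
      have h1 : (4:ℕ) ^ (k + 1) ≤ 4 ^ j := Nat.pow_le_pow_right (by norm_num) (by omega)
      have h4k1 : (4:ℕ) ^ (k + 1) = 4 * 4 ^ k := by ring
      omega
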